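/- Let f : ℝ × ℝⁿ × ℝᵖ → ℝⁿ, γ : ℝ × ℝⁿ × ℝᵖ → ℝ and Γ : ℝⁿ × ℝᵖ → ℝ be continuously differentiable, and let x : ℝᵖ × [0,T] → ℝⁿ be twice continuously differentiable with ∂x/∂t(θ,t) = f(t, x(θ,t), θ) and x(θ,0) = x₀ independent of θ. Fix times 0 < t₁ < t₂ < ... < t_K < T and define J(θ) = Σ_{k=1}^K γ(t_k, x(θ,t_k), θ) + Γ(x(θ,T), θ). Fix θ₀ ∈ ℝᵖ and suppose λ : [0,T] → ℝⁿ is continuous on each interval (t_k, t_{k+1}] (with t_{K+1} = T), continuously differentiable there with λ'(t)ᵀ = −λ(t)ᵀ D_x f(t, x(θ₀,t), θ₀), terminal condition λ(T)ᵀ = D_x Γ(x(θ₀,T), θ₀), and jump condition λ(t_k⁻)ᵀ = λ(t_k)ᵀ + D_x γ(t_k, x(θ₀,t_k), θ₀) at each t_k, where λ(t_k⁻) is the left limit of λ at t_k. Then dJ/dθ at θ₀ equals D_θ Γ(x(θ₀,T), θ₀) + Σ_{k=1}^K D_θ γ(t_k, x(θ₀,t_k), θ₀) + ∫₀ᵀ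 λ(t)ᵀ D_θ f(t, x(θ₀,t), θ₀) dt, where λ(t)ᵀ M denotes composition of the linear map M with the functional y ↦ ⟨λ(t), y⟩. -/

import Mathlib

set_option maxHeartbeats 1000000

open Set Filter ContinuousLinearMap MeasureTheory intervalIntegral

/-- **Hybrid adjoint dynamics for point-wise costs (deterministic specialization).**
Fix instants `0 = τ 0 < τ 1 < ... < τ K < τ (K+1) = T` and the criterion
`J(θ) = Σ_{k=1}^K γ(τ k, x(θ, τ k), θ) + Γ(x(θ,T), θ)` for `ẋ = f(t, x, θ)` with
`x(θ,0) = x₀` independent of `θ`.  The adjoint `λ` follows the homogeneous backward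
dynamics `λ'(t)ᵀ = −λ(t)ᵀ D_x f` on each inter-jump interval, has terminal condition
`λ(T)ᵀ = D_x Γ` (with `λ` left-continuous at `T`), and at each instant `τ k` its left
limit `lm k` satisfies the jump condition `(lm k)ᵀ = λ(τ k)ᵀ + D_x γ(τ k, ·)`
(with `λ(τ k)` the post-jump value, `λ` being right-continuous at `τ k`).  Then
`dJ/dθ|_{θ₀} = D_θ Γ + Σ_{k=1}^K D_θ γ(τ k, ·) + ∫₀ᵀ λ(t)ᵀ D_θ f dt`,
where `λ(t)ᵀ M = (innerSL ℝ (l t)).comp M`. -/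
theorem hybrid_adjoint_gradient
    (n p K : ℕ) (T : ℝ) (hT : 0 < T)
    (f : ℝ → EuclideanSpace ℝ (Fin n) → EuclideanSpace ℝ (Fin p) → EuclideanSpace ℝ (Fin n))
    (γ : ℝ → EuclideanSpace ℝ (Fin n) → EuclideanSpace ℝ (Fin p) → ℝ)
    (Γ : EuclideanSpace ℝ (Fin n) → EuclideanSpace ℝ (Fin p) → ℝ)
    (hf : ContDiff ℝ 1
      (fun q : ℝ × EuclideanSpace ℝ (Fin n) × EuclideanSpace ℝ (Fin p) => f q.1 q.2.1 q.2.2))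
    (hγ : ContDiff ℝ 1
      (fun q : ℝ × EuclideanSpace ℝ (Fin n) × EuclideanSpace ℝ (Fin p) => γ q.1 q.2.1 q.2.2))
    (hΓ : ContDiff ℝ 1
      (fun q : EuclideanSpace ℝ (Fin n) × EuclideanSpace ℝ (Fin p) => Γ q.1 q.2))
    (x : EuclideanSpace ℝ (Fin p) → ℝ → EuclideanSpace ℝ (Fin n))
    (hx : ContDiffOn ℝ 2
      (fun q : EuclideanSpace ℝ (Fin p) × ℝ => x q.1 q.2)
      (Set.univ ×ˢ Set.Icc (0 : ℝ) T))
    (hode : ∀ θ, ∀ t ∈ Set.Icc (0 : ℝ) T,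
      HasDerivWithinAt (x θ) (f t (x θ t) θ) (Set.Icc (0 : ℝ) T) t)
    (x₀ : EuclideanSpace ℝ (Fin n)) (hx0 : ∀ θ, x θ 0 = x₀)
    (τ : ℕ → ℝ) (hτ0 : τ 0 = 0) (hτT : τ (K + 1) = T)
    (hτmono : ∀ k ≤ K, τ k < τ (k + 1))
    (θ₀ : EuclideanSpace ℝ (Fin p))
    (l l' : ℝ → EuclideanSpace ℝ (Fin n))
    (lm : ℕ → EuclideanSpace ℝ (Fin n))
    (hlcont : ∀ k ≤ K, ContinuousOn l (Set.Ico (τ k) (τ (k + 1))))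
    (hlderiv : ∀ k ≤ K, ∀ t ∈ Set.Ico (τ k) (τ (k + 1)),
      HasDerivWithinAt l (l' t) (Set.Ico (τ k) (τ (k + 1))) t)
    (hl'cont : ∀ k ≤ K, ContinuousOn l' (Set.Ico (τ k) (τ (k + 1))))
    (hadj : ∀ k ≤ K, ∀ t ∈ Set.Ico (τ k) (τ (k + 1)),
      innerSL ℝ (l' t)
        = -((innerSL ℝ (l t)).comp (fderiv ℝ (fun y => f t y θ₀) (x θ₀ t))))
    (hlT : Filter.Tendsto l (nhdsWithin T (Set.Iio T)) (nhds (l T)))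
    (hlTval : innerSL ℝ (l T) = fderiv ℝ (fun y => Γ y θ₀) (x θ₀ T))
    (hleftlim : ∀ k, 1 ≤ k → k ≤ K →
      Filter.Tendsto l (nhdsWithin (τ k) (Set.Iio (τ k))) (nhds (lm k)))
    (hjump : ∀ k, 1 ≤ k → k ≤ K →
      innerSL ℝ (lm k)
        = innerSL ℝ (l (τ k)) + fderiv ℝ (fun y => γ (τ k) y θ₀) (x θ₀ (τ k))) :
    HasFDerivAt
      (fun θ => (∑ k ∈ Finset.Icc 1 K, γ (τ k) (x θ (τ k)) θ) + Γ (x θ T) θ)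
      (fderiv ℝ (fun θ => Γ (x θ₀ T) θ) θ₀
        + (∑ k ∈ Finset.Icc 1 K, fderiv ℝ (fun θ => γ (τ k) (x θ₀ (τ k)) θ) θ₀)
        + ∫ t in (0 : ℝ)..T,
            (innerSL ℝ (l t)).comp (fderiv ℝ (fun θ => f t (x θ₀ t) θ) θ₀))
      θ₀ := by
  classical
  -- ## Notation
  set s : Set (EuclideanSpace ℝ (Fin p) × ℝ) := Set.univ ×ˢ Set.Icc (0 : ℝ) T with hs_def
  set X : EuclideanSpace ℝ (Fin p) × ℝ → EuclideanSpace ℝ (Fin n) := fun q => x q.1 q.2 with hX_def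
  -- ## monotonicity of τ
  have hτle : ∀ i j : ℕ, i ≤ j → j ≤ K + 1 → τ i ≤ τ j := by
    intro i j hij hj
    induction j with
    | zero => simp [Nat.le_zero.mp hij]
    | succ j ih =>
      rcases Nat.lt_succ_iff_lt_or_eq.mp (Nat.lt_succ_of_le hij) with h | h
      · exact le_trans (ih (Nat.lt_succ_iff.mp h) (le_trans (Nat.le_succ j) hj))
          (hτmono j (Nat.succ_le_succ_iff.mp hj)).le
      · exact le_of_eq (congrArg τ h)
  have hτmem : ∀ k ≤ K + 1, τ k ∈ Set.Icc (0 : ℝ) T := by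
    intro k hk
    exact ⟨hτ0 ▸ hτle 0 k (Nat.zero_le k) hk, hτT ▸ hτle k (K + 1) hk le_rfl⟩
  -- ## the sensitivity S and its basic facts
  have hsud : UniqueDiffOn ℝ s := uniqueDiffOn_univ.prod (uniqueDiffOn_Icc hT)
  have hXdiff : DifferentiableOn ℝ X s := hx.differentiableOn two_ne_zero
  set DW : EuclideanSpace ℝ (Fin p) × ℝ → (EuclideanSpace ℝ (Fin p) × ℝ →L[ℝ] EuclideanSpace ℝ (Fin n)) := fun q => fderivWithin ℝ X s q with hDW_def
  have hDW : ∀ q ∈ s, HasFDerivWithinAt X (DW q) s q :=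
    fun q hq => (hXdiff q hq).hasFDerivWithinAt
  have hDWcont : ContinuousOn DW s := hx.continuousOn_fderivWithin hsud one_le_two
  set S : ℝ → (EuclideanSpace ℝ (Fin p) →L[ℝ] EuclideanSpace ℝ (Fin n)) := fun t => (DW (θ₀, t)).comp (ContinuousLinearMap.inl ℝ (EuclideanSpace ℝ (Fin p)) ℝ)
    with hS_def
  have hslice : ∀ (θ : EuclideanSpace ℝ (Fin p)), ∀ t ∈ Set.Icc (0 : ℝ) T,
      HasFDerivAt (fun θ' => x θ' t) ((DW (θ, t)).comp (ContinuousLinearMap.inl ℝ (EuclideanSpace ℝ (Fin p)) ℝ)) θ := by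
    intro θ t ht
    have h1 : HasFDerivAt (fun θ' : EuclideanSpace ℝ (Fin p) => ((θ', t) : EuclideanSpace ℝ (Fin p) × ℝ))
        (ContinuousLinearMap.inl ℝ (EuclideanSpace ℝ (Fin p)) ℝ) θ := hasFDerivAt_prodMk_left θ t
    have h2 := hDW (θ, t) (by simp [hs_def, ht])
    have h3 := h2.comp θ (h1.hasFDerivWithinAt (s := Set.univ)) (fun θ' _ => by simp [hs_def, ht])
    rw [hasFDerivWithinAt_univ] at h3
    exact h3
  have hS0 : S 0 = 0 := by
    have h1 := hslice θ₀ 0 ⟨le_rfl, hT.le⟩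
    have h2 : HasFDerivAt (fun _ : EuclideanSpace ℝ (Fin p) => x₀) (0 : EuclideanSpace ℝ (Fin p) →L[ℝ] EuclideanSpace ℝ (Fin n)) θ₀ := hasFDerivAt_const x₀ θ₀
    have h3 : (fun θ' => x θ' 0) = fun _ : EuclideanSpace ℝ (Fin p) => x₀ := funext fun θ' => hx0 θ'
    rw [h3] at h1
    exact h1.unique h2
  have hxcont : ContinuousOn (fun t => x θ₀ t) (Set.Icc (0 : ℝ) T) := by
    have := hx.continuousOn.comp
      (Continuous.continuousOn (continuous_const.prodMk continuous_id : Continuous (fun t : ℝ => ((θ₀, t) : EuclideanSpace ℝ (Fin p) × ℝ))))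
      (fun t ht => ⟨trivial, ht⟩)
    exact this
  have hScont : ContinuousOn S (Set.Icc (0 : ℝ) T) := by
    have h1 : ContinuousOn (fun t => DW (θ₀, t)) (Set.Icc (0 : ℝ) T) :=
      hDWcont.comp
        (Continuous.continuousOn (continuous_const.prodMk continuous_id : Continuous (fun t : ℝ => ((θ₀, t) : EuclideanSpace ℝ (Fin p) × ℝ))))
        (fun t ht => ⟨trivial, ht⟩)
    exact h1.clm_comp continuousOn_const
  -- ## partial derivatives of f
  set F : ℝ × EuclideanSpace ℝ (Fin n) × EuclideanSpace ℝ (Fin p) → EuclideanSpace ℝ (Fin n) := fun q => f q.1 q.2.1 q.2.2 with hF_def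
  have hFdiff : Differentiable ℝ F := hf.differentiable one_ne_zero
  set jx : EuclideanSpace ℝ (Fin n) →L[ℝ] ℝ × EuclideanSpace ℝ (Fin n) × EuclideanSpace ℝ (Fin p) :=
    (ContinuousLinearMap.inr ℝ ℝ (EuclideanSpace ℝ (Fin n) × EuclideanSpace ℝ (Fin p))).comp (ContinuousLinearMap.inl ℝ (EuclideanSpace ℝ (Fin n)) (EuclideanSpace ℝ (Fin p))) with hjx_def
  set jθ : EuclideanSpace ℝ (Fin p) →L[ℝ] ℝ × EuclideanSpace ℝ (Fin n) × EuclideanSpace ℝ (Fin p) :=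
    (ContinuousLinearMap.inr ℝ ℝ (EuclideanSpace ℝ (Fin n) × EuclideanSpace ℝ (Fin p))).comp (ContinuousLinearMap.inr ℝ (EuclideanSpace ℝ (Fin n)) (EuclideanSpace ℝ (Fin p))) with hjθ_def
  have hinx : ∀ (t : ℝ) (θ : EuclideanSpace ℝ (Fin p)) (y : EuclideanSpace ℝ (Fin n)),
      HasFDerivAt (fun y' : EuclideanSpace ℝ (Fin n) => ((t, y', θ) : ℝ × EuclideanSpace ℝ (Fin n) × EuclideanSpace ℝ (Fin p))) jx y := fun t θ y =>
    (hasFDerivAt_prodMk_right t ((y, θ) : EuclideanSpace ℝ (Fin n) × EuclideanSpace ℝ (Fin p))).comp y (hasFDerivAt_prodMk_left y θ)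
  have hinθ : ∀ (t : ℝ) (y : EuclideanSpace ℝ (Fin n)) (θ : EuclideanSpace ℝ (Fin p)),
      HasFDerivAt (fun θ' : EuclideanSpace ℝ (Fin p) => ((t, y, θ') : ℝ × EuclideanSpace ℝ (Fin n) × EuclideanSpace ℝ (Fin p))) jθ θ := fun t y θ =>
    (hasFDerivAt_prodMk_right t ((y, θ) : EuclideanSpace ℝ (Fin n) × EuclideanSpace ℝ (Fin p))).comp θ (hasFDerivAt_prodMk_right y θ)
  have hfx : ∀ (t : ℝ) (y : EuclideanSpace ℝ (Fin n)) (θ : EuclideanSpace ℝ (Fin p)),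
      HasFDerivAt (fun y' => f t y' θ) ((fderiv ℝ F (t, y, θ)).comp jx) y := fun t y θ =>
    by have := ((hFdiff (t, y, θ)).hasFDerivAt).comp y (hinx t θ y); exact this
  have hfθ : ∀ (t : ℝ) (y : EuclideanSpace ℝ (Fin n)) (θ : EuclideanSpace ℝ (Fin p)),
      HasFDerivAt (fun θ' => f t y θ') ((fderiv ℝ F (t, y, θ)).comp jθ) θ := fun t y θ =>
    by have := ((hFdiff (t, y, θ)).hasFDerivAt).comp θ (hinθ t y θ); exact this
  have hDxf_eq : ∀ t : ℝ, fderiv ℝ (fun y => f t y θ₀) (x θ₀ t)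
      = (fderiv ℝ F (t, x θ₀ t, θ₀)).comp jx := fun t => (hfx t (x θ₀ t) θ₀).fderiv
  have hDθf_eq : ∀ t : ℝ, fderiv ℝ (fun θ => f t (x θ₀ t) θ) θ₀
      = (fderiv ℝ F (t, x θ₀ t, θ₀)).comp jθ := fun t => (hfθ t (x θ₀ t) θ₀).fderiv
  set Dxf : ℝ → (EuclideanSpace ℝ (Fin n) →L[ℝ] EuclideanSpace ℝ (Fin n)) := fun t => fderiv ℝ (fun y => f t y θ₀) (x θ₀ t) with hDxf_def
  set Dθf : ℝ → (EuclideanSpace ℝ (Fin p) →L[ℝ] EuclideanSpace ℝ (Fin n)) := fun t => fderiv ℝ (fun θ => f t (x θ₀ t) θ) θ₀ with hDθf_def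
  have hDθfcont : ContinuousOn Dθf (Set.Icc (0 : ℝ) T) := by
    have heq : Dθf = fun t => (fderiv ℝ F (t, x θ₀ t, θ₀)).comp jθ := funext hDθf_eq
    rw [heq]
    have h1 : ContinuousOn (fun t => fderiv ℝ F (t, x θ₀ t, θ₀)) (Set.Icc (0 : ℝ) T) :=
      (hf.continuous_fderiv one_ne_zero).comp_continuousOn
        ((continuousOn_id).prodMk (hxcont.prodMk continuousOn_const))
    exact h1.clm_comp continuousOn_const
  -- ## the variational equation
  have hvar : ∀ t ∈ Set.Ioo (0 : ℝ) T,
      HasDerivAt S ((Dxf t).comp (S t) + Dθf t) t := by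
    intro t ht
    have hq : ((θ₀, t) : EuclideanSpace ℝ (Fin p) × ℝ) ∈ interior s := by
      rw [hs_def, interior_prod_eq, interior_univ, interior_Icc]
      exact ⟨trivial, ht⟩
    have hnb : s ∈ nhds ((θ₀, t) : EuclideanSpace ℝ (Fin p) × ℝ) :=
      mem_interior_iff_mem_nhds.mp hq
    have hX2 : ContDiffAt ℝ 2 X (θ₀, t) := hx.contDiffAt hnb
    have hev : ∀ᶠ q in nhds ((θ₀, t) : EuclideanSpace ℝ (Fin p) × ℝ),
        HasFDerivAt X (fderiv ℝ X q) q := by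
      filter_upwards [hX2.eventually (by norm_num)] with q hq
      exact (hq.differentiableAt two_ne_zero).hasFDerivAt
    have hD1 : ContDiffAt ℝ 1 (fderiv ℝ X) (θ₀, t) := hX2.fderiv_right (by norm_num)
    have hf'' : HasFDerivAt (fderiv ℝ X) (fderiv ℝ (fderiv ℝ X) (θ₀, t)) (θ₀, t) :=
      (hD1.differentiableAt one_ne_zero).hasFDerivAt
    set f'' := fderiv ℝ (fderiv ℝ X) (θ₀, t) with hf''_def
    have hsymm := second_derivative_symmetric_of_eventually hev hf''
    have hι : HasDerivAt (fun r : ℝ => ((θ₀, r) : EuclideanSpace ℝ (Fin p) × ℝ))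
        (((0 : EuclideanSpace ℝ (Fin p)), (1 : ℝ))) t := by
      simpa using (hasFDerivAt_prodMk_right θ₀ t).hasDerivAt
    have hcomp : HasDerivAt (fun r => fderiv ℝ X (θ₀, r))
        (f'' ((0 : EuclideanSpace ℝ (Fin p)), (1 : ℝ))) t := hf''.comp_hasDerivAt t hι
    have hLin : HasDerivAt
        (fun r => (fderiv ℝ X (θ₀, r)).comp (ContinuousLinearMap.inl ℝ (EuclideanSpace ℝ (Fin p)) ℝ))
        ((f'' ((0 : EuclideanSpace ℝ (Fin p)), (1 : ℝ))).comp
          (ContinuousLinearMap.inl ℝ (EuclideanSpace ℝ (Fin p)) ℝ)) t := by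
      simpa using hcomp.clm_comp
        (hasDerivAt_const t (ContinuousLinearMap.inl ℝ (EuclideanSpace ℝ (Fin p)) ℝ))
    have hSeq : S =ᶠ[nhds t]
        fun r => (fderiv ℝ X (θ₀, r)).comp (ContinuousLinearMap.inl ℝ (EuclideanSpace ℝ (Fin p)) ℝ) := by
      filter_upwards [isOpen_Ioo.mem_nhds ht] with r hr
      have hmem : s ∈ nhds ((θ₀, r) : EuclideanSpace ℝ (Fin p) × ℝ) := by
        apply mem_interior_iff_mem_nhds.mp
        rw [hs_def, interior_prod_eq, interior_univ, interior_Icc]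
        exact ⟨trivial, hr⟩
      simp only [hS_def, hDW_def]
      rw [fderivWithin_of_mem_nhds hmem]
    have hS' : HasDerivAt S
        ((f'' ((0 : EuclideanSpace ℝ (Fin p)), (1 : ℝ))).comp
          (ContinuousLinearMap.inl ℝ (EuclideanSpace ℝ (Fin p)) ℝ)) t :=
      hLin.congr_of_eventuallyEq hSeq
    have hXd : HasFDerivAt X (fderiv ℝ X (θ₀, t)) (θ₀, t) := hev.self_of_nhds
    have hfw : fderivWithin ℝ X s (θ₀, t) = fderiv ℝ X (θ₀, t) := fderivWithin_of_mem_nhds hnb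
    set W : (EuclideanSpace ℝ (Fin p) × ℝ) →L[ℝ]
        (ℝ × EuclideanSpace ℝ (Fin n) × EuclideanSpace ℝ (Fin p)) :=
      (ContinuousLinearMap.snd ℝ (EuclideanSpace ℝ (Fin p)) ℝ).prod
        ((fderiv ℝ X (θ₀, t)).prod (ContinuousLinearMap.fst ℝ (EuclideanSpace ℝ (Fin p)) ℝ))
      with hW_def
    set φ : EuclideanSpace ℝ (Fin p) × ℝ → EuclideanSpace ℝ (Fin n) :=
      fun q => fderiv ℝ X q ((0 : EuclideanSpace ℝ (Fin p)), (1 : ℝ)) with hφ_def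
    have hφ : HasFDerivAt φ
        ((ContinuousLinearMap.apply ℝ (EuclideanSpace ℝ (Fin n))
          (((0 : EuclideanSpace ℝ (Fin p)), (1 : ℝ)))).comp f'') (θ₀, t) :=
      (ContinuousLinearMap.apply ℝ (EuclideanSpace ℝ (Fin n))
        (((0 : EuclideanSpace ℝ (Fin p)), (1 : ℝ)))).hasFDerivAt.comp _ hf''
    have hψin : HasFDerivAt
        (fun q : EuclideanSpace ℝ (Fin p) × ℝ =>
          ((q.2, X q, q.1) : ℝ × EuclideanSpace ℝ (Fin n) × EuclideanSpace ℝ (Fin p)))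
        W (θ₀, t) := (hasFDerivAt_snd).prodMk (hXd.prodMk hasFDerivAt_fst)
    have hψ : HasFDerivAt (fun q : EuclideanSpace ℝ (Fin p) × ℝ => f q.2 (X q) q.1)
        ((fderiv ℝ F (t, x θ₀ t, θ₀)).comp W) (θ₀, t) :=
      by have := (hFdiff (t, x θ₀ t, θ₀)).hasFDerivAt.comp ((θ₀, t) : EuclideanSpace ℝ (Fin p) × ℝ) hψin; exact this
    have hφψ : φ =ᶠ[nhds ((θ₀, t) : EuclideanSpace ℝ (Fin p) × ℝ)]
        fun q => f q.2 (X q) q.1 := by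
      have hio : (Set.univ ×ˢ Set.Ioo (0 : ℝ) T) ∈
          nhds ((θ₀, t) : EuclideanSpace ℝ (Fin p) × ℝ) :=
        (isOpen_univ.prod isOpen_Ioo).mem_nhds ⟨trivial, ht⟩
      filter_upwards [hev, hio] with q hq1 hq2
      have hι' : HasDerivAt (fun r : ℝ => ((q.1, r) : EuclideanSpace ℝ (Fin p) × ℝ))
          (((0 : EuclideanSpace ℝ (Fin p)), (1 : ℝ))) q.2 := by
        simpa using (hasFDerivAt_prodMk_right q.1 q.2).hasDerivAt
      have hin : HasDerivAt (fun r => X (q.1, r))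
          (fderiv ℝ X q ((0 : EuclideanSpace ℝ (Fin p)), (1 : ℝ))) q.2 :=
        by have := hq1.comp_hasDerivAt q.2 hι'; exact this
      have hq2' : q.2 ∈ Set.Ioo (0 : ℝ) T := hq2.2
      have hode' : HasDerivAt (x q.1) (f q.2 (x q.1 q.2) q.1) q.2 :=
        (hode q.1 q.2 (Set.Ioo_subset_Icc_self hq2')).hasDerivAt
          (mem_of_superset (isOpen_Ioo.mem_nhds hq2') Set.Ioo_subset_Icc_self)
      exact hin.unique hode'
    have hfdeq : (ContinuousLinearMap.apply ℝ (EuclideanSpace ℝ (Fin n))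
          (((0 : EuclideanSpace ℝ (Fin p)), (1 : ℝ)))).comp f''
        = (fderiv ℝ F (t, x θ₀ t, θ₀)).comp W := by
      rw [← hφ.fderiv, ← hψ.fderiv]
      exact hφψ.fderiv_eq
    have key : (f'' ((0 : EuclideanSpace ℝ (Fin p)), (1 : ℝ))).comp
          (ContinuousLinearMap.inl ℝ (EuclideanSpace ℝ (Fin p)) ℝ)
        = (Dxf t).comp (S t) + Dθf t := by
      ext v
      have eS : fderiv ℝ X (θ₀, t) ((v, 0) : EuclideanSpace ℝ (Fin p) × ℝ) = S t v := by
        simp only [hS_def, hDW_def, hfw]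
        rfl
      have e1 : (f'' ((0 : EuclideanSpace ℝ (Fin p)), (1 : ℝ))).comp
            (ContinuousLinearMap.inl ℝ (EuclideanSpace ℝ (Fin p)) ℝ) v
          = f'' ((v, 0) : EuclideanSpace ℝ (Fin p) × ℝ)
              ((0 : EuclideanSpace ℝ (Fin p)), (1 : ℝ)) := by
        rw [ContinuousLinearMap.comp_apply, ContinuousLinearMap.inl_apply]
        exact hsymm _ _
      have e2 : f'' ((v, 0) : EuclideanSpace ℝ (Fin p) × ℝ)
            ((0 : EuclideanSpace ℝ (Fin p)), (1 : ℝ))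
          = fderiv ℝ F (t, x θ₀ t, θ₀) ((0 : ℝ), S t v, v) := by
        have happ := congrFun (congrArg DFunLike.coe hfdeq) ((v, 0) : EuclideanSpace ℝ (Fin p) × ℝ)
        simp only [ContinuousLinearMap.comp_apply, ContinuousLinearMap.apply_apply] at happ
        rw [happ]
        congr 1
        simp only [hW_def, ContinuousLinearMap.prod_apply, ContinuousLinearMap.coe_snd',
          ContinuousLinearMap.coe_fst', eS]
      have e3 : ((0 : ℝ), S t v, v) = jx (S t v) + jθ v := by
        simp [hjx_def, hjθ_def, Prod.ext_iff]
      rw [e1, e2, e3, map_add]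
      simp only [ContinuousLinearMap.add_apply, ContinuousLinearMap.comp_apply,
        hDxf_def, hDθf_def, hDxf_eq t, hDθf_eq t]
    exact key ▸ hS'
  -- ## FTC on each inter-jump interval
  set g' : ℝ → (EuclideanSpace ℝ (Fin p) →L[ℝ] ℝ) :=
    fun t => (innerSL ℝ (l t)).comp (fderiv ℝ (fun θ => f t (x θ₀ t) θ) θ₀) with hg'_def
  set G : ℝ → (EuclideanSpace ℝ (Fin p) →L[ℝ] ℝ) := fun t => (innerSL ℝ (l t)).comp (S t) with hG_def
  set m : ℕ → EuclideanSpace ℝ (Fin n) := fun j => if j = K + 1 then l T else lm j with hm_def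
  have hblim : ∀ k ≤ K, Tendsto l (nhdsWithin (τ (k + 1)) (Set.Iio (τ (k + 1))))
      (nhds (m (k + 1))) := by
    intro k hk
    rcases eq_or_lt_of_le hk with h | h
    · subst h; simp only [hm_def, if_pos rfl]; rw [hτT]; exact hlT
    · have hk1 : k + 1 ≤ K := h
      have : m (k + 1) = lm (k + 1) := by
        simp [hm_def, Nat.ne_of_lt (Nat.lt_succ_of_le hk1), Nat.ne_of_lt h]
      rw [this]
      exact hleftlim (k + 1) (Nat.succ_le_succ (Nat.zero_le k)) hk1
  have hint : ∀ k ≤ K, IntervalIntegrable g' volume (τ k) (τ (k + 1)) ∧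
      ∫ t in τ k..τ (k + 1), g' t
        = (innerSL ℝ (m (k + 1))).comp (S (τ (k + 1))) - G (τ k) := by
    intro k hk
    have hab : τ k < τ (k + 1) := hτmono k hk
    have ha0 : (0 : ℝ) ≤ τ k := (hτmem k (le_trans hk (Nat.le_succ K))).1
    have hbT : τ (k + 1) ≤ T := (hτmem (k + 1) (Nat.succ_le_succ hk)).2
    have hsub : Set.Icc (τ k) (τ (k + 1)) ⊆ Set.Icc (0 : ℝ) T := Set.Icc_subset_Icc ha0 hbT
    set lb : ℝ → EuclideanSpace ℝ (Fin n) :=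
      Function.update l (τ (k + 1)) (m (k + 1)) with hlb_def
    have hlb_cont : ContinuousOn lb (Set.Icc (τ k) (τ (k + 1))) := by
      intro t ht
      rcases eq_or_lt_of_le ht.2 with h | h
      · rw [h]
        have hIccIns : Set.Icc (τ k) (τ (k + 1))
            = insert (τ (k + 1)) (Set.Ico (τ k) (τ (k + 1))) := (Set.Ico_insert_right hab.le).symm
        unfold ContinuousWithinAt
        rw [hIccIns, nhdsWithin_insert]
        have hb : lb (τ (k + 1)) = m (k + 1) := Function.update_self _ _ _
        rw [hb]
        refine Tendsto.sup ?_ ?_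
        · simpa [hb] using tendsto_pure_nhds lb (τ (k + 1))
        · have h1 : Tendsto l (nhdsWithin (τ (k + 1)) (Set.Ico (τ k) (τ (k + 1))))
              (nhds (m (k + 1))) :=
            (hblim k hk).mono_left (nhdsWithin_mono _ Set.Ico_subset_Iio_self)
          refine Tendsto.congr' ?_ h1
          filter_upwards [self_mem_nhdsWithin] with r hr
          exact (Function.update_of_ne (ne_of_lt hr.2) _ _).symm
      · have htIco : t ∈ Set.Ico (τ k) (τ (k + 1)) := ⟨ht.1, h⟩
        have h1 : ContinuousWithinAt l (Set.Ico (τ k) (τ (k + 1))) t := hlcont k hk t htIco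
        have h2 : ContinuousWithinAt l (Set.Icc (τ k) (τ (k + 1))) t := by
          apply h1.mono_of_mem_nhdsWithin
          apply mem_nhdsWithin.mpr
          exact ⟨Set.Iio (τ (k + 1)), isOpen_Iio, h, fun y hy => ⟨hy.2.1, hy.1⟩⟩
        apply h2.congr_of_eventuallyEq
        · filter_upwards [mem_nhdsWithin_of_mem_nhds (isOpen_Iio.mem_nhds h)] with r hr
          exact Function.update_of_ne (ne_of_lt hr) _ _
        · exact Function.update_of_ne (ne_of_lt h) _ _
    set Gb : ℝ → (EuclideanSpace ℝ (Fin p) →L[ℝ] ℝ) :=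
      fun t => (innerSL ℝ (lb t)).comp (S t) with hGb_def
    have hGb_cont : ContinuousOn Gb (Set.Icc (τ k) (τ (k + 1))) :=
      ((innerSL ℝ).continuous.comp_continuousOn hlb_cont).clm_comp (hScont.mono hsub)
    have hderiv : ∀ t ∈ Set.Ioo (τ k) (τ (k + 1)),
        HasDerivWithinAt Gb (g' t) (Set.Ioi t) t := by
      intro t ht
      have htIco : t ∈ Set.Ico (τ k) (τ (k + 1)) := ⟨ht.1.le, ht.2⟩
      have hIco_nhds : Set.Ico (τ k) (τ (k + 1)) ∈ nhds t :=
        mem_of_superset (isOpen_Ioo.mem_nhds ht) Set.Ioo_subset_Ico_self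
      have hl'at : HasDerivAt l (l' t) t := (hlderiv k hk t htIco).hasDerivAt hIco_nhds
      have ht0T : t ∈ Set.Ioo (0 : ℝ) T :=
        ⟨lt_of_le_of_lt ha0 ht.1, lt_of_lt_of_le ht.2 hbT⟩
      have hSd := hvar t ht0T
      have h1 : HasDerivAt (fun r => innerSL ℝ (l r)) (innerSL ℝ (l' t)) t :=
        (innerSL ℝ : EuclideanSpace ℝ (Fin n) →L[ℝ]
          (EuclideanSpace ℝ (Fin n) →L[ℝ] ℝ)).hasFDerivAt.comp_hasDerivAt t hl'at
      have hG : HasDerivAt G (g' t) t := by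
        have h2 := h1.clm_comp hSd
        rw [hadj k hk t htIco] at h2
        convert h2 using 1
        ext v
        simp only [hg'_def, hG_def, hDxf_def, hDθf_def, ContinuousLinearMap.comp_apply,
          ContinuousLinearMap.add_apply, ContinuousLinearMap.neg_apply, map_add,
          ContinuousLinearMap.coe_comp', Function.comp_apply]
        ring
      have hGbG : Gb =ᶠ[nhds t] G := by
        filter_upwards [isOpen_Iio.mem_nhds ht.2] with r hr
        simp only [hGb_def, hG_def, hlb_def, Function.update_of_ne (ne_of_lt (Set.mem_Iio.mp hr))]
      exact (hG.congr_of_eventuallyEq hGbG).hasDerivWithinAt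
    have hGbInt : IntervalIntegrable (fun t => (innerSL ℝ (lb t)).comp (Dθf t))
        volume (τ k) (τ (k + 1)) := by
      apply ContinuousOn.intervalIntegrable
      rw [Set.uIcc_of_le hab.le]
      exact ((innerSL ℝ).continuous.comp_continuousOn hlb_cont).clm_comp (hDθfcont.mono hsub)
    have hae : (fun t => (innerSL ℝ (lb t)).comp (Dθf t)) =ᵐ[volume] g' := by
      apply MeasureTheory.ae_iff.mpr
      refine measure_mono_null ?_ (Real.volume_singleton (a := τ (k + 1)))
      intro t ht
      simp only [Set.mem_setOf_eq] at ht
      by_contra hne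
      apply ht
      have hlbt : lb t = l t := Function.update_of_ne (by simpa using hne) _ _
      simp only [hg'_def, hlbt, hDθf_def]
    have hg'int : IntervalIntegrable g' volume (τ k) (τ (k + 1)) := by
      rw [intervalIntegrable_iff] at hGbInt ⊢
      exact hGbInt.congr_fun_ae hae.restrict
    have hFTC := intervalIntegral.integral_eq_sub_of_hasDeriv_right_of_le hab.le
      hGb_cont hderiv hg'int
    refine ⟨hg'int, ?_⟩
    rw [hFTC]
    have hGbb : Gb (τ (k + 1)) = (innerSL ℝ (m (k + 1))).comp (S (τ (k + 1))) := by
      simp [hGb_def, hlb_def]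
    have hGba : Gb (τ k) = G (τ k) := by
      simp [hGb_def, hG_def, hlb_def, Function.update_of_ne hab.ne]
    rw [hGbb, hGba]
  -- ## total integral and telescoping
  have hIntegral : ∫ t in (0 : ℝ)..T, g' t
      = (fderiv ℝ (fun y => Γ y θ₀) (x θ₀ T)).comp (S T)
        + ∑ k ∈ Finset.Icc 1 K,
            (fderiv ℝ (fun y => γ (τ k) y θ₀) (x θ₀ (τ k))).comp (S (τ k)) := by
    have hintegr : ∀ j < K + 1, IntervalIntegrable g' volume (τ j) (τ (j + 1)) :=
      fun j hj => (hint j (Nat.lt_succ_iff.mp hj)).1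
    have hsum := intervalIntegral.sum_integral_adjacent_intervals hintegr
    rw [hτ0, hτT] at hsum
    rw [← hsum]
    have hsummand : ∀ k ∈ Finset.range (K + 1),
        ∫ t in τ k..τ (k + 1), g' t
          = (G (τ (k + 1)) - G (τ k))
            + (if k + 1 ≤ K then
                (fderiv ℝ (fun y => γ (τ (k + 1)) y θ₀) (x θ₀ (τ (k + 1)))).comp (S (τ (k + 1)))
              else 0) := by
      intro k hk
      have hk' : k ≤ K := Nat.lt_succ_iff.mp (Finset.mem_range.mp hk)
      rw [(hint k hk').2]
      rcases eq_or_lt_of_le hk' with h | h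
      · subst h
        have hm1 : m (k + 1) = l T := by simp [hm_def]
        rw [hm1, if_neg (Nat.not_succ_le_self k)]
        simp only [hG_def, hτT]
        abel
      · have hk1 : k + 1 ≤ K := h
        have hmm : m (k + 1) = lm (k + 1) := by
          simp [hm_def, Nat.ne_of_lt (Nat.lt_succ_of_le hk1), Nat.ne_of_lt h]
        rw [hmm, if_pos hk1, hjump (k + 1) (Nat.succ_le_succ (Nat.zero_le k)) hk1]
        simp only [hG_def, ContinuousLinearMap.add_comp]
        abel
    rw [Finset.sum_congr rfl hsummand, Finset.sum_add_distrib,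
      Finset.sum_range_sub (fun k => G (τ k))]
    have hG0 : G (τ 0) = 0 := by
      rw [hτ0]
      simp only [hG_def, hS0, ContinuousLinearMap.comp_zero]
    have hGT : G (τ (K + 1)) = (fderiv ℝ (fun y => Γ y θ₀) (x θ₀ T)).comp (S T) := by
      simp only [hG_def, hτT, hlTval]
    rw [hG0, hGT, sub_zero]
    congr 1
    have hstep1 : ∑ k ∈ Finset.range (K + 1),
        (if k + 1 ≤ K then
            (fderiv ℝ (fun y => γ (τ (k + 1)) y θ₀) (x θ₀ (τ (k + 1)))).comp (S (τ (k + 1)))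
          else 0)
        = ∑ k ∈ Finset.range K,
            (fderiv ℝ (fun y => γ (τ (k + 1)) y θ₀) (x θ₀ (τ (k + 1)))).comp (S (τ (k + 1))) := by
      rw [Finset.sum_range_succ, if_neg (Nat.not_succ_le_self K), add_zero]
      refine Finset.sum_congr rfl fun k hk => ?_
      exact if_pos (Nat.succ_le_of_lt (Finset.mem_range.mp hk))
    rw [hstep1, ← Finset.Ico_add_one_right_eq_Icc, Finset.sum_Ico_eq_sum_range]
    simp only [Nat.add_sub_cancel]
    refine Finset.sum_congr rfl fun k _ => ?_
    rw [Nat.add_comm 1 k]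
  -- ## derivative of the criterion
  have hSslice : ∀ t ∈ Set.Icc (0 : ℝ) T, HasFDerivAt (fun θ' => x θ' t) (S t) θ₀ :=
    fun t ht => hslice θ₀ t ht
  set Fγ : ℝ × EuclideanSpace ℝ (Fin n) × EuclideanSpace ℝ (Fin p) → ℝ :=
    fun q => γ q.1 q.2.1 q.2.2 with hFγ_def
  have hFγdiff : Differentiable ℝ Fγ := hγ.differentiable one_ne_zero
  have hγx : ∀ (t : ℝ) (y : EuclideanSpace ℝ (Fin n)) (θ : EuclideanSpace ℝ (Fin p)),
      HasFDerivAt (fun y' => γ t y' θ) ((fderiv ℝ Fγ (t, y, θ)).comp jx) y := fun t y θ =>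
    by have := ((hFγdiff (t, y, θ)).hasFDerivAt).comp y (hinx t θ y); exact this
  have hγθ : ∀ (t : ℝ) (y : EuclideanSpace ℝ (Fin n)) (θ : EuclideanSpace ℝ (Fin p)),
      HasFDerivAt (fun θ' => γ t y θ') ((fderiv ℝ Fγ (t, y, θ)).comp jθ) θ := fun t y θ =>
    by have := ((hFγdiff (t, y, θ)).hasFDerivAt).comp θ (hinθ t y θ); exact this
  have hterm : ∀ k ∈ Finset.Icc 1 K, HasFDerivAt (fun θ => γ (τ k) (x θ (τ k)) θ)
      ((fderiv ℝ (fun y => γ (τ k) y θ₀) (x θ₀ (τ k))).comp (S (τ k))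
        + fderiv ℝ (fun θ => γ (τ k) (x θ₀ (τ k)) θ) θ₀) θ₀ := by
    intro k hk
    obtain ⟨hk1, hkK⟩ := Finset.mem_Icc.mp hk
    have hτk : τ k ∈ Set.Icc (0 : ℝ) T := hτmem k (le_trans hkK (Nat.le_succ K))
    have hin : HasFDerivAt
        (fun θ : EuclideanSpace ℝ (Fin p) =>
          ((τ k, x θ (τ k), θ) : ℝ × EuclideanSpace ℝ (Fin n) × EuclideanSpace ℝ (Fin p)))
        ((0 : EuclideanSpace ℝ (Fin p) →L[ℝ] ℝ).prod
          ((S (τ k)).prod (ContinuousLinearMap.id ℝ (EuclideanSpace ℝ (Fin p))))) θ₀ :=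
      (hasFDerivAt_const (τ k) θ₀).prodMk ((hSslice (τ k) hτk).prodMk (hasFDerivAt_id θ₀))
    have hcomp := (hFγdiff (τ k, x θ₀ (τ k), θ₀)).hasFDerivAt.comp θ₀ hin
    have heq : (fderiv ℝ Fγ (τ k, x θ₀ (τ k), θ₀)).comp
          ((0 : EuclideanSpace ℝ (Fin p) →L[ℝ] ℝ).prod
            ((S (τ k)).prod (ContinuousLinearMap.id ℝ (EuclideanSpace ℝ (Fin p)))))
        = (fderiv ℝ (fun y => γ (τ k) y θ₀) (x θ₀ (τ k))).comp (S (τ k))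
            + fderiv ℝ (fun θ => γ (τ k) (x θ₀ (τ k)) θ) θ₀ := by
      ext v
      have e3 : ((0 : ℝ), S (τ k) v, v) = jx (S (τ k) v) + jθ v := by
        simp [hjx_def, hjθ_def, Prod.ext_iff]
      have lhs1 : (fderiv ℝ Fγ (τ k, x θ₀ (τ k), θ₀)).comp
            ((0 : EuclideanSpace ℝ (Fin p) →L[ℝ] ℝ).prod
              ((S (τ k)).prod (ContinuousLinearMap.id ℝ (EuclideanSpace ℝ (Fin p))))) v
          = fderiv ℝ Fγ (τ k, x θ₀ (τ k), θ₀) ((0 : ℝ), S (τ k) v, v) := rfl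
      rw [lhs1, e3, map_add]
      rw [(hγx (τ k) (x θ₀ (τ k)) θ₀).fderiv, (hγθ (τ k) (x θ₀ (τ k)) θ₀).fderiv]
      rfl
    exact heq ▸ hcomp
  have hΓterm : HasFDerivAt (fun θ => Γ (x θ T) θ)
      ((fderiv ℝ (fun y => Γ y θ₀) (x θ₀ T)).comp (S T)
        + fderiv ℝ (fun θ => Γ (x θ₀ T) θ) θ₀) θ₀ := by
    set FΓ : EuclideanSpace ℝ (Fin n) × EuclideanSpace ℝ (Fin p) → ℝ :=
      fun q => Γ q.1 q.2 with hFΓ_def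
    have hFΓdiff : Differentiable ℝ FΓ := hΓ.differentiable one_ne_zero
    have hΓx : HasFDerivAt (fun y => Γ y θ₀)
        ((fderiv ℝ FΓ (x θ₀ T, θ₀)).comp
          (ContinuousLinearMap.inl ℝ (EuclideanSpace ℝ (Fin n)) (EuclideanSpace ℝ (Fin p))))
        (x θ₀ T) :=
      by have := (hFΓdiff (x θ₀ T, θ₀)).hasFDerivAt.comp (x θ₀ T) (hasFDerivAt_prodMk_left (𝕜 := ℝ) (x θ₀ T) θ₀); exact this
    have hΓθ : HasFDerivAt (fun θ => Γ (x θ₀ T) θ)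
        ((fderiv ℝ FΓ (x θ₀ T, θ₀)).comp
          (ContinuousLinearMap.inr ℝ (EuclideanSpace ℝ (Fin n)) (EuclideanSpace ℝ (Fin p))))
        θ₀ :=
      by have := (hFΓdiff (x θ₀ T, θ₀)).hasFDerivAt.comp θ₀ (hasFDerivAt_prodMk_right (𝕜 := ℝ) (x θ₀ T) θ₀); exact this
    have hin : HasFDerivAt
        (fun θ : EuclideanSpace ℝ (Fin p) =>
          ((x θ T, θ) : EuclideanSpace ℝ (Fin n) × EuclideanSpace ℝ (Fin p)))
        ((S T).prod (ContinuousLinearMap.id ℝ (EuclideanSpace ℝ (Fin p)))) θ₀ :=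
      (hSslice T ⟨hT.le, le_rfl⟩).prodMk (hasFDerivAt_id θ₀)
    have hcomp : HasFDerivAt (fun θ => Γ (x θ T) θ)
        ((fderiv ℝ FΓ (x θ₀ T, θ₀)).comp
          ((S T).prod (ContinuousLinearMap.id ℝ (EuclideanSpace ℝ (Fin p))))) θ₀ :=
      HasFDerivAt.comp (f := fun θ => ((x θ T, θ) :
          EuclideanSpace ℝ (Fin n) × EuclideanSpace ℝ (Fin p))) θ₀
        (hFΓdiff (x θ₀ T, θ₀)).hasFDerivAt hin
    have heq : (fderiv ℝ FΓ (x θ₀ T, θ₀)).comp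
          ((S T).prod (ContinuousLinearMap.id ℝ (EuclideanSpace ℝ (Fin p))))
        = (fderiv ℝ (fun y => Γ y θ₀) (x θ₀ T)).comp (S T)
            + fderiv ℝ (fun θ => Γ (x θ₀ T) θ) θ₀ := by
      ext v
      have e3 : ((S T v, v) : EuclideanSpace ℝ (Fin n) × EuclideanSpace ℝ (Fin p))
          = ContinuousLinearMap.inl ℝ (EuclideanSpace ℝ (Fin n)) (EuclideanSpace ℝ (Fin p))
              (S T v)
            + ContinuousLinearMap.inr ℝ (EuclideanSpace ℝ (Fin n)) (EuclideanSpace ℝ (Fin p))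
              v := by
        simp [Prod.ext_iff]
      have lhs1 : (fderiv ℝ FΓ (x θ₀ T, θ₀)).comp
            ((S T).prod (ContinuousLinearMap.id ℝ (EuclideanSpace ℝ (Fin p)))) v
          = fderiv ℝ FΓ (x θ₀ T, θ₀) (S T v, v) := rfl
      rw [lhs1, e3, map_add, hΓx.fderiv, hΓθ.fderiv]
      rfl
    exact heq ▸ hcomp
  have hsumderiv := HasFDerivAt.sum hterm
  have htotal := hsumderiv.add hΓterm
  convert htotal using 1
  all_goals try rfl
  · ext θ
    simp [Finset.sum_apply]
  have hIg : (∫ t in (0 : ℝ)..T,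
        (innerSL ℝ (l t)).comp (fderiv ℝ (fun θ => f t (x θ₀ t) θ) θ₀))
      = ∫ t in (0 : ℝ)..T, g' t := by
    simp only [hg'_def]
  rw [hIg, hIntegral, Finset.sum_add_distrib]
  abel
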